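/- Let E be a real inner product space, let v : E → ℝ → E be L_v-Lipschitz in its first argument uniformly in time (L_v ≥ 0), let g : E → E satisfy ‖g(z)‖ ≤ G for all z (G ≥ 0), and let η : ℝ → ℝ be continuous and nonnegative on [t₀, 1]. Suppose x, y : ℝ → E satisfy, for all t ∈ [t₀, 1], x′(t) = v(x(t), t) and y′(t) = v(y(t), t) − η(t) • g(y(t)), with x(t₀) = y(t₀). Then for all t ∈ [t₀, 1], ‖y(t) − x(t)‖ ≤ ∫_{t₀}^{t} e^{L_v(t−s)} η(s) G ds. (Proposition A.4: trajectory deviation under late-time adjustment, via Grönwall's inequality.) -/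

import Mathlib

/-- Proposition A.4 (trajectory deviation under late-time adjustment):
if `x` solves the base ODE `x' = v(x,t)` and `y` solves the logic-adjusted ODE
`y' = v(y,t) - η(t) • g(y)` on `[t₀, 1]` with `x t₀ = y t₀`, `v` being
`Lv`-Lipschitz in its first argument, `‖g‖ ≤ G`, and `η` continuous and
nonnegative, then the deviation obeys the Grönwall bound
`‖y t - x t‖ ≤ ∫_{t₀}^t e^{Lv (t - s)} η s * G ds`. -/
theorem prop_gronwall_deviation
    {E : Type*} [NormedAddCommGroup E] [InnerProductSpace ℝ E]
    (v : E → ℝ → E) (Lv : ℝ) (hLv : 0 ≤ Lv)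
    (hlip : ∀ (t : ℝ) (z w : E), ‖v z t - v w t‖ ≤ Lv * ‖z - w‖)
    (g : E → E) (G : ℝ) (hG : 0 ≤ G) (hgb : ∀ z : E, ‖g z‖ ≤ G)
    (η : ℝ → ℝ) (t₀ : ℝ)
    (hηcont : ContinuousOn η (Set.Icc t₀ 1))
    (hηnn : ∀ s ∈ Set.Icc t₀ 1, 0 ≤ η s)
    (x y : ℝ → E)
    (hx : ∀ t ∈ Set.Icc t₀ 1, HasDerivAt x (v (x t) t) t)
    (hy : ∀ t ∈ Set.Icc t₀ 1, HasDerivAt y (v (y t) t - η t • g (y t)) t)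
    (h0 : x t₀ = y t₀) :
    ∀ t ∈ Set.Icc t₀ 1,
      ‖y t - x t‖ ≤ ∫ s in t₀..t, Real.exp (Lv * (t - s)) * η s * G := by
  intro t ht
  have ht01 : t₀ ≤ 1 := ht.1.trans ht.2
  -- continuous extension of η
  set ηc : ℝ → ℝ := fun s => η (Set.projIcc t₀ 1 ht01 s) with hηcdef
  have hηcC : Continuous ηc :=
    hηcont.comp_continuous (continuous_subtype_val.comp continuous_projIcc)
      fun s => (Set.projIcc t₀ 1 ht01 s).2
  have hηceq : ∀ s ∈ Set.Icc t₀ 1, ηc s = η s := fun s hs => by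
    simp [hηcdef, Set.projIcc_of_mem ht01 hs]
  -- the integrand and bound functions
  set φ : ℝ → ℝ := fun s => Real.exp (-(Lv * s)) * ηc s * G with hφdef
  have hφC : Continuous φ := by
    apply Continuous.mul _ continuous_const
    exact ((continuous_const.mul continuous_id).neg.rexp).mul hηcC
  set C : ℝ → ℝ := fun τ => ∫ s in t₀..τ, φ s with hCdef
  have hC' : ∀ τ : ℝ, HasDerivAt C (φ τ) τ := fun τ =>
    intervalIntegral.integral_hasDerivAt_right (hφC.intervalIntegrable _ _)
      (hφC.stronglyMeasurable.stronglyMeasurableAtFilter) hφC.continuousAt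
  set B : ℝ → ℝ := fun τ => Real.exp (Lv * τ) * C τ with hBdef
  have hexp' : ∀ τ : ℝ, HasDerivAt (fun τ => Real.exp (Lv * τ)) (Lv * Real.exp (Lv * τ)) τ := by
    intro τ
    simpa [mul_comm] using ((hasDerivAt_id τ).const_mul Lv).exp
  have hB' : ∀ τ : ℝ, HasDerivAt B (Lv * B τ + ηc τ * G) τ := by
    intro τ
    have h := (hexp' τ).mul (hC' τ)
    convert h using 1
    · rfl
    · rfl
    · rfl
    have hee : Real.exp (Lv * τ) * Real.exp (-(Lv * τ)) = 1 := by
      rw [← Real.exp_add]; simp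
    simp only [hBdef, hφdef]
    calc Lv * (Real.exp (Lv * τ) * C τ) + ηc τ * G
        = Lv * Real.exp (Lv * τ) * C τ
          + Real.exp (Lv * τ) * (Real.exp (-(Lv * τ)) * ηc τ * G) := by
          rw [show Real.exp (Lv * τ) * (Real.exp (-(Lv * τ)) * ηc τ * G)
              = (Real.exp (Lv * τ) * Real.exp (-(Lv * τ))) * (ηc τ * G) by ring, hee]
          ring
      _ = _ := rfl
  -- the deviation
  set f : ℝ → E := fun τ => y τ - x τ with hfdef
  set f' : ℝ → E := fun τ => (v (y τ) τ - η τ • g (y τ)) - v (x τ) τ with hf'def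
  have hfd : ∀ τ ∈ Set.Icc t₀ 1, HasDerivAt f (f' τ) τ := fun τ hτ =>
    (hy τ hτ).sub (hx τ hτ)
  have hfc : ContinuousOn f (Set.Icc t₀ 1) := fun τ hτ =>
    (hfd τ hτ).continuousAt.continuousWithinAt
  have hf0 : f t₀ = 0 := by simp [hfdef, h0]
  -- ε-perturbed Grönwall bound
  have key : ∀ ε : ℝ, 0 < ε →
      ‖f t‖ ≤ B t + ε * Real.exp ((Lv + 1) * (t - t₀)) := by
    intro ε hε
    set Bε : ℝ → ℝ := fun τ => B τ + ε * Real.exp ((Lv + 1) * (τ - t₀)) with hBεdef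
    have hBε' : ∀ τ : ℝ,
        HasDerivAt Bε (Lv * B τ + ηc τ * G + ε * ((Lv + 1) * Real.exp ((Lv + 1) * (τ - t₀)))) τ := by
      intro τ
      have h2 : HasDerivAt (fun τ => Real.exp ((Lv + 1) * (τ - t₀)))
          ((Lv + 1) * Real.exp ((Lv + 1) * (τ - t₀))) τ := by
        simpa [mul_comm] using (((hasDerivAt_id τ).sub_const t₀).const_mul (Lv + 1)).exp
      exact (hB' τ).add (h2.const_mul ε)
    have main : ∀ ⦃τ⦄, τ ∈ Set.Icc t₀ 1 → ‖f τ‖ ≤ Bε τ := by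
      apply image_norm_le_of_norm_deriv_right_lt_deriv_boundary' hfc
        (fun τ hτ => (hfd τ (Set.Ico_subset_Icc_self hτ)).hasDerivWithinAt)
      · rw [hf0, norm_zero]
        simp only [hBεdef, hBdef, hCdef]
        rw [intervalIntegral.integral_same]
        simp only [mul_zero, sub_self, Real.exp_zero, mul_one]
        positivity
      · exact fun τ _ => (hBε' τ).continuousAt.continuousWithinAt
      · exact fun τ _ => (hBε' τ).hasDerivWithinAt
      · intro τ hτ hEq
        have hτ' : τ ∈ Set.Icc t₀ 1 := Set.Ico_subset_Icc_self hτ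
        have hηnn' : 0 ≤ η τ := hηnn τ hτ'
        have h1 : ‖f' τ‖ ≤ Lv * ‖f τ‖ + η τ * G := by
          have : f' τ = (v (y τ) τ - v (x τ) τ) - η τ • g (y τ) := by
            simp only [hf'def]; abel
          rw [this]
          refine (norm_sub_le _ _).trans (add_le_add ((hlip τ _ _).trans_eq rfl) ?_)
          rw [norm_smul, Real.norm_eq_abs, abs_of_nonneg hηnn']
          exact mul_le_mul_of_nonneg_left (hgb _) hηnn'
        have hpos : 0 < ε * Real.exp ((Lv + 1) * (τ - t₀)) := by positivity
        calc ‖f' τ‖ ≤ Lv * ‖f τ‖ + η τ * G := h1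
          _ = Lv * Bε τ + ηc τ * G := by rw [hEq, hηceq τ hτ']
          _ = Lv * B τ + ηc τ * G + Lv * (ε * Real.exp ((Lv + 1) * (τ - t₀))) := by
              simp only [hBεdef]; ring
          _ < Lv * B τ + ηc τ * G + ε * ((Lv + 1) * Real.exp ((Lv + 1) * (τ - t₀))) := by
              have : Lv * (ε * Real.exp ((Lv + 1) * (τ - t₀)))
                  < (Lv + 1) * (ε * Real.exp ((Lv + 1) * (τ - t₀))) :=
                mul_lt_mul_of_pos_right (by linarith) hpos
              linarith [this]
    exact main ht
  -- pass to the limit ε → 0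
  have hft : ‖f t‖ ≤ B t := by
    set c : ℝ := Real.exp ((Lv + 1) * (t - t₀)) with hc
    have hcpos : 0 < c := Real.exp_pos _
    refine le_of_forall_pos_le_add fun δ hδ => ?_
    have := key (δ / c) (div_pos hδ hcpos)
    rwa [div_mul_cancel₀ _ hcpos.ne'] at this
  -- identify B t with the desired integral
  have hBt : B t = ∫ s in t₀..t, Real.exp (Lv * (t - s)) * η s * G := by
    simp only [hBdef, hCdef]
    rw [← intervalIntegral.integral_const_mul]
    apply intervalIntegral.integral_congr
    intro s hs
    rw [Set.uIcc_of_le ht.1] at hs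
    have hs' : s ∈ Set.Icc t₀ 1 := ⟨hs.1, hs.2.trans ht.2⟩
    simp only [hφdef]
    rw [show Real.exp (Lv * t) * (Real.exp (-(Lv * s)) * ηc s * G)
        = (Real.exp (Lv * t) * Real.exp (-(Lv * s))) * (ηc s * G) by ring,
      ← Real.exp_add, hηceq s hs']
    ring_nf
  calc ‖y t - x t‖ = ‖f t‖ := rfl
    _ ≤ B t := hft
    _ = _ := hBt
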